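/- For every t ∈ ℝ, exp(t(S+Sᵀ)) · R · (exp(t(S+Sᵀ)))ᵀ = R; in particular, (S+Sᵀ)·R = −R·(S+Sᵀ), i.e. S+Sᵀ lies in the symplectic Lie algebra of the form R. -/

import Mathlib

open Matrix

/-- The Gram matrix of the form `R(x,y) = Σ_{i=1}^n (−1)^{i−1}(x_i y_{n+i} − x_{n+i} y_i)`,
with `0`-based indices. -/
def Rmat (n : ℕ) : Matrix (Fin (2*n)) (Fin (2*n)) ℝ := fun i j =>
  if (j : ℕ) = (i : ℕ) + n then (-1 : ℝ) ^ (i : ℕ)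
  else if (i : ℕ) = (j : ℕ) + n then -(-1 : ℝ) ^ (j : ℕ)
  else 0

/-- The cyclic shift matrix `S`: `S_{i,i+1} = 1` for `1 ≤ i ≤ 2n−1` and
`S_{2n,1} = (−1)^{n−1}` (here with `0`-based indices). -/
def Smat (n : ℕ) : Matrix (Fin (2*n)) (Fin (2*n)) ℝ := fun r c =>
  if (c : ℕ) = (r : ℕ) + 1 then 1
  else if (r : ℕ) = 2*n - 1 ∧ (c : ℕ) = 0 then (-1 : ℝ) ^ (n - 1)
  else 0

lemma pow_mod_aux (e : ℕ) : (-1 : ℝ) ^ e = if e % 2 = 0 then 1 else -1 := by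
  rcases Nat.even_or_odd e with h | h
  · rw [h.neg_one_pow, if_pos (Nat.even_iff.mp h)]
  · rw [h.neg_one_pow, if_neg (by simp [Nat.odd_iff.mp h])]

lemma sumR_right_lt (n : ℕ) (f : Fin (2*n) → ℝ) (j : Fin (2*n)) (hj : (j : ℕ) < n) :
    ∑ k, f k * Rmat n k j = f ⟨(j : ℕ) + n, by omega⟩ * (-(-1 : ℝ) ^ (j : ℕ)) := by
  rw [Finset.sum_eq_single (⟨(j : ℕ) + n, by omega⟩ : Fin (2*n))]
  · congr 1
    simp only [Rmat, Fin.val_mk]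
    rw [if_neg (by omega)]
    simp
  · intro k _ hk
    have h0 : Rmat n k j = 0 := by
      have hk' : (k : ℕ) ≠ (j : ℕ) + n := fun h => hk (Fin.ext (by simp [h]))
      simp only [Rmat]
      rw [if_neg (by omega), if_neg hk']
    rw [h0, mul_zero]
  · intro h; exact absurd (Finset.mem_univ _) h

lemma sumR_right_ge (n : ℕ) (f : Fin (2*n) → ℝ) (j : Fin (2*n)) (hj : n ≤ (j : ℕ)) :
    ∑ k, f k * Rmat n k j = f ⟨(j : ℕ) - n, by omega⟩ * ((-1 : ℝ) ^ ((j : ℕ) - n)) := by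
  rw [Finset.sum_eq_single (⟨(j : ℕ) - n, by omega⟩ : Fin (2*n))]
  · congr 1
    simp only [Rmat, Fin.val_mk]
    rw [if_pos (by omega)]
  · intro k _ hk
    have h0 : Rmat n k j = 0 := by
      have hk2 := k.2
      have hk' : ¬ ((j : ℕ) = (k : ℕ) + n) := fun h => hk (Fin.ext (by simp; omega))
      simp only [Rmat]
      rw [if_neg hk', if_neg (by omega)]
    rw [h0, mul_zero]
  · intro h; exact absurd (Finset.mem_univ _) h

lemma sumR_left_lt (n : ℕ) (f : Fin (2*n) → ℝ) (i : Fin (2*n)) (hi : (i : ℕ) < n) :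
    ∑ k, Rmat n i k * f k = ((-1 : ℝ) ^ (i : ℕ)) * f ⟨(i : ℕ) + n, by omega⟩ := by
  rw [Finset.sum_eq_single (⟨(i : ℕ) + n, by omega⟩ : Fin (2*n))]
  · congr 1
    simp only [Rmat, Fin.val_mk]
    simp
  · intro k _ hk
    have h0 : Rmat n i k = 0 := by
      have hk' : ¬ ((k : ℕ) = (i : ℕ) + n) := fun h => hk (Fin.ext (by simp [h]))
      simp only [Rmat]
      rw [if_neg hk', if_neg (by omega)]
    rw [h0, zero_mul]
  · intro h; exact absurd (Finset.mem_univ _) h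

lemma sumR_left_ge (n : ℕ) (f : Fin (2*n) → ℝ) (i : Fin (2*n)) (hi : n ≤ (i : ℕ)) :
    ∑ k, Rmat n i k * f k = (-(-1 : ℝ) ^ ((i : ℕ) - n)) * f ⟨(i : ℕ) - n, by omega⟩ := by
  rw [Finset.sum_eq_single (⟨(i : ℕ) - n, by omega⟩ : Fin (2*n))]
  · congr 1
    simp only [Rmat, Fin.val_mk]
    have hi2 := i.2
    rw [if_neg (by omega), if_pos (by omega)]
  · intro k _ hk
    have h0 : Rmat n i k = 0 := by
      have hk2 := k.2
      have hk' : ¬ ((i : ℕ) = (k : ℕ) + n) := fun h => hk (Fin.ext (by simp; omega))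
      have hi2 := i.2
      simp only [Rmat]
      rw [if_neg (by omega), if_neg hk']
    rw [h0, zero_mul]
  · intro h; exact absurd (Finset.mem_univ _) h

set_option maxHeartbeats 2000000 in
lemma key_anticomm (n : ℕ) :
    (Smat n + (Smat n)ᵀ) * Rmat n = -(Rmat n * (Smat n + (Smat n)ᵀ)) := by
  ext i j
  rw [Matrix.neg_apply, Matrix.mul_apply, Matrix.mul_apply]
  have hi2 := i.2
  have hj2 := j.2
  rcases lt_or_ge ((i : ℕ)) n with hi | hi <;> rcases lt_or_ge ((j : ℕ)) n with hj | hj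
  · rw [sumR_right_lt n _ j hj, sumR_left_lt n (fun k => (Smat n + (Smat n)ᵀ) k j) i hi]
    simp only [Matrix.add_apply, Matrix.transpose_apply, Smat, Fin.val_mk]
    split_ifs <;>
      first
        | (exfalso; omega)
        | (simp only [pow_mod_aux]; split_ifs <;> first | (exfalso; omega) | norm_num)
  · rw [sumR_right_ge n _ j hj, sumR_left_lt n (fun k => (Smat n + (Smat n)ᵀ) k j) i hi]
    simp only [Matrix.add_apply, Matrix.transpose_apply, Smat, Fin.val_mk]
    split_ifs <;>
      first
        | (exfalso; omega)
        | (simp only [pow_mod_aux]; split_ifs <;> first | (exfalso; omega) | norm_num)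
  · rw [sumR_right_lt n _ j hj, sumR_left_ge n (fun k => (Smat n + (Smat n)ᵀ) k j) i hi]
    simp only [Matrix.add_apply, Matrix.transpose_apply, Smat, Fin.val_mk]
    split_ifs <;>
      first
        | (exfalso; omega)
        | (simp only [pow_mod_aux]; split_ifs <;> first | (exfalso; omega) | norm_num)
  · rw [sumR_right_ge n _ j hj, sumR_left_ge n (fun k => (Smat n + (Smat n)ᵀ) k j) i hi]
    simp only [Matrix.add_apply, Matrix.transpose_apply, Smat, Fin.val_mk]
    split_ifs <;>
      first
        | (exfalso; omega)
        | (simp only [pow_mod_aux]; split_ifs <;> first | (exfalso; omega) | norm_num)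

set_option maxHeartbeats 800000 in
lemma Rsq (n : ℕ) : Rmat n * Rmat n = -1 := by
  ext i j
  rw [Matrix.mul_apply, Matrix.neg_apply, Matrix.one_apply]
  have hi2 := i.2
  have hj2 := j.2
  have hfe : (i = j) ↔ ((i : ℕ) = (j : ℕ)) := Fin.ext_iff
  rcases lt_or_ge ((i : ℕ)) n with hi | hi
  · rw [sumR_left_lt n (fun k => Rmat n k j) i hi]
    simp only [Rmat, Fin.val_mk, hfe]
    split_ifs <;>
      first
        | (exfalso; omega)
        | (simp only [pow_mod_aux]; split_ifs <;> first | (exfalso; omega) | norm_num)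
  · rw [sumR_left_ge n (fun k => Rmat n k j) i hi]
    simp only [Rmat, Fin.val_mk, hfe]
    split_ifs <;>
      first
        | (exfalso; omega)
        | (simp only [pow_mod_aux]; split_ifs <;> first | (exfalso; omega) | norm_num)

/-- For every `t`, `exp(t(S+Sᵀ))` preserves the form `R`; in particular
`(S+Sᵀ)·R = −R·(S+Sᵀ)`, i.e. `S+Sᵀ` lies in the symplectic Lie algebra of `R`. -/
theorem stmt13 (n : ℕ) :
    (∀ t : ℝ,
      NormedSpace.exp (t • (Smat n + (Smat n)ᵀ)) * Rmat n *
        (NormedSpace.exp (t • (Smat n + (Smat n)ᵀ)))ᵀ = Rmat n) ∧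
    (Smat n + (Smat n)ᵀ) * Rmat n = -(Rmat n * (Smat n + (Smat n)ᵀ)) := by
  have hkey := key_anticomm n
  refine ⟨?_, hkey⟩
  intro t
  set A : Matrix (Fin (2*n)) (Fin (2*n)) ℝ := Smat n + (Smat n)ᵀ with hA
  set R : Matrix (Fin (2*n)) (Fin (2*n)) ℝ := Rmat n with hR
  have hAsymm : Aᵀ = A := by
    rw [hA, Matrix.transpose_add, Matrix.transpose_transpose, add_comm]
  have hRR : R * R = -1 := Rsq n
  have hRA : R * A = -(A * R) := by rw [hkey, neg_neg]
  have hRAR : R * A * R = A := by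
    rw [hRA, neg_mul, mul_assoc, hRR]
    simp
  have hRinv : R * (-R) = 1 := by rw [mul_neg, hRR]; simp
  have hRinv' : (-R) * R = 1 := by rw [neg_mul, hRR]; simp
  let U : (Matrix (Fin (2*n)) (Fin (2*n)) ℝ)ˣ := ⟨R, -R, hRinv, hRinv'⟩
  have hconj : (U : Matrix _ _ ℝ) * (-(t • A)) * (↑U⁻¹ : Matrix _ _ ℝ) = t • A := by
    show R * (-(t • A)) * (-R) = t • A
    rw [mul_neg, mul_neg, neg_mul, neg_neg, Matrix.mul_smul, Matrix.smul_mul, hRAR]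
  have hexp : NormedSpace.exp (t • A) = R * NormedSpace.exp (-(t • A)) * (-R) := by
    conv_lhs => rw [← hconj]
    exact Matrix.exp_units_conj U (-(t • A))
  have htrans : (NormedSpace.exp (t • A))ᵀ = NormedSpace.exp (t • A) := by
    rw [← Matrix.exp_transpose, Matrix.transpose_smul, hAsymm]
  have hcomm : Commute (-(t • A)) (t • A) := (Commute.refl (t • A)).neg_left
  have h5 : NormedSpace.exp (-(t • A)) * NormedSpace.exp (t • A) = 1 := by
    rw [← Matrix.exp_add_of_commute _ _ hcomm, neg_add_cancel, NormedSpace.exp_zero]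
  have h6 : NormedSpace.exp (t • A) * R = R * NormedSpace.exp (-(t • A)) := by
    rw [hexp, mul_assoc, mul_assoc, hRinv', mul_one]
  rw [htrans, h6, mul_assoc, h5, mul_one]
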